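/- Let N ≥ 3 and let n be an integer with 1 ≤ n ≤ N, and suppose z ∈ C_n∖S_n. Then z ∉ R_n if and only if there exist an integer i with 1 ≤ i < n and a vector x ∈ R_i∖S_i such that all entries of z − x are non-negative. -/

import Mathlib

open Real

/-- The golden ratio `(1 + √5)/2`. -/
noncomputable def phiR : ℝ := (1 + Real.sqrt 5) / 2

/-- `mmax p q n = max(h_n·log p, h_{n-1}·log q)`, the logarithmic Mahler measure
of `p^{h_n}/q^{h_{n-1}}` for distinct primes `p`, `q`, where `h` is Fibonacci. -/
noncomputable def mmax (p q n : ℕ) : ℝ :=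
  max ((Nat.fib n : ℝ) * Real.log p) ((Nat.fib (n - 1) : ℝ) * Real.log q)

/-- `gmax n = max(h_n, φ·h_{n-1})`. -/
noncomputable def gmax (n : ℕ) : ℝ :=
  max (Nat.fib n : ℝ) (phiR * (Nat.fib (n - 1) : ℝ))

/-- The equation defining `t_n(p,q)`:
`m(p^{h_n}/q^{h_{n-1}})^t = m(p^{h_{n-1}}/q^{h_{n-2}})^t + m(p^{h_{n-2}}/q^{h_{n-3}})^t`. -/
def peq (p q n : ℕ) (t : ℝ) : Prop :=
  mmax p q n ^ t = mmax p q (n - 1) ^ t + mmax p q (n - 2) ^ t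

/-- The equation defining `s_n`:
`max(h_n, φ h_{n-1})^t = max(h_{n-1}, φ h_{n-2})^t + max(h_{n-2}, φ h_{n-3})^t`. -/
def geq (n : ℕ) (t : ℝ) : Prop :=
  gmax n ^ t = gmax (n - 1) ^ t + gmax (n - 2) ^ t

/-- Condition (W) on a pair of primes `(p,q)` relative to `N`. -/
def CondW (N p q : ℕ) : Prop :=
  ((Nat.fib N : ℝ) / Nat.fib (N - 1) < Real.log q / Real.log p ∧
    Real.log q / Real.log p < (Nat.fib (N - 1) : ℝ) / Nat.fib (N - 2)) ∨
  ((Nat.fib (N - 1) : ℝ) / Nat.fib (N - 2) < Real.log q / Real.log p ∧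
    Real.log q / Real.log p < (Nat.fib N : ℝ) / Nat.fib (N - 1))

/-- `V_n`: vectors `x ∈ ℕ^N` (1-based entry `i` is `x ⟨i-1⟩`) with
`Σ x_i h_i = h_n` and `Σ x_i h_{i-1} = h_{n-1}`. -/
def Vset (N n : ℕ) : Set (Fin N → ℕ) :=
  {x | ∑ i, x i * Nat.fib ((i : ℕ) + 1) = Nat.fib n ∧
       ∑ i, x i * Nat.fib (i : ℕ) = Nat.fib (n - 1)}

/-- The measure function `f_x(t) = (Σ_{i=1}^N x_i·max(h_i log p, h_{i-1} log q)^t)^{1/t}`. -/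
noncomputable def fmeas (N p q : ℕ) (x : Fin N → ℕ) (t : ℝ) : ℝ :=
  (∑ i, (x i : ℝ) * mmax p q ((i : ℕ) + 1) ^ t) ^ (1 / t)

/-- `x_n(i)`: the vector whose (i−2)nd (1-based) entry is `h_{n+1−i}`, whose
(i−1)st entry is `h_{n+2−i}`, and whose other entries are 0.  (For `i = 2`, `n = 1`
this gives `x_1(2) = (1,0,…,0)`.) -/
def xvec (N n i : ℕ) : Fin N → ℕ := fun j =>
  if (j : ℕ) + 3 = i then Nat.fib (n + 1 - i)
  else if (j : ℕ) + 2 = i then Nat.fib (n + 2 - i)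
  else 0

/-- `S_n = {x_n(i) : 3 ≤ i ≤ n+1}` for `n ≥ 2`, and `S_1 = {x_1(2)}`. -/
def Sset (N n : ℕ) : Set (Fin N → ℕ) :=
  if n = 1 then {xvec N 1 2}
  else {x | ∃ i, 3 ≤ i ∧ i ≤ n + 1 ∧ x = xvec N n i}

/-- `z` is almost consecutive-free: `z_j·z_{j+1} ≠ 0` implies `z_i = 0` for all `i > j+1`. -/
def ACF (N : ℕ) (z : Fin N → ℕ) : Prop :=
  ∀ (j : Fin N) (hj : (j : ℕ) + 1 < N),
    z j * z ⟨(j : ℕ) + 1, hj⟩ ≠ 0 → ∀ i : Fin N, (j : ℕ) + 1 < (i : ℕ) → z i = 0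

/-- `C_n`: the almost consecutive-free elements of `V_n`. -/
def Cset (N n : ℕ) : Set (Fin N → ℕ) := {z ∈ Vset N n | ACF N z}

/-- A factorization of `z ∈ V_n`: a `K`-tuple `x` with `x k ∈ V_{idx k}`,
`1 ≤ idx k ≤ n`, and `z = Σ_k x k`. -/
def IsFactorization (N n : ℕ) (z : Fin N → ℕ) {K : ℕ}
    (idx : Fin K → ℕ) (x : Fin K → Fin N → ℕ) : Prop :=
  (∀ k, 1 ≤ idx k ∧ idx k ≤ n ∧ x k ∈ Vset N (idx k)) ∧ z = ∑ k, x k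

/-- A tuple is `S`-type if each component lies in `∪_{i=1}^n S_i`. -/
def STypeFac (N n : ℕ) {K : ℕ} (x : Fin K → Fin N → ℕ) : Prop :=
  ∀ k, ∃ i, 1 ≤ i ∧ i ≤ n ∧ x k ∈ Sset N i

/-- `z` is `S`-restricted: every non-trivial (i.e. `K ≠ 1`) factorization is `S`-type. -/
def SRestricted (N n : ℕ) (z : Fin N → ℕ) : Prop :=
  ∀ (K : ℕ) (idx : Fin K → ℕ) (x : Fin K → Fin N → ℕ),
    IsFactorization N n z idx x → K ≠ 1 → STypeFac N n x

/-- `R_n`: the `S`-restricted elements of `C_n`. -/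
def Rset (N n : ℕ) : Set (Fin N → ℕ) := {z ∈ Cset N n | SRestricted N n z}

/-- The infimum attaining set `U_x = {t > 0 : f_x(t) = min{f_y(t) : y ∈ V_j}}`. -/
def Uset (N p q j : ℕ) (x : Fin N → ℕ) : Set ℝ :=
  {t | 0 < t ∧ IsLeast ((fun y => fmeas N p q y t) '' Vset N j) (fmeas N p q x t)}

/-- The shift map `λ((x_1,…,x_N)) = (0,x_1,…,x_{N-1})`. -/
def shiftMap (N : ℕ) (x : Fin N → ℕ) : Fin N → ℕ := fun j =>
  if (j : ℕ) = 0 then 0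
  else x ⟨(j : ℕ) - 1, lt_of_le_of_lt (Nat.sub_le _ _) j.isLt⟩

section Aux

lemma sum_single_mul {N : ℕ} (a : Fin N) (c : ℕ) (f : ℕ → ℕ) :
    ∑ j : Fin N, (Pi.single a c : Fin N → ℕ) j * f (j : ℕ) = c * f (a : ℕ) := by
  rw [Finset.sum_eq_single a]
  · simp
  · intro b _ hb; simp [Pi.single_apply, hb]
  · intro h; exact absurd (Finset.mem_univ a) h

lemma single_mem_V {N : ℕ} (j : Fin N) :
    (Pi.single j 1 : Fin N → ℕ) ∈ Vset N ((j : ℕ) + 1) := by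
  constructor
  · simpa using sum_single_mul j 1 (fun t => Nat.fib (t + 1))
  · simpa using sum_single_mul j 1 (fun t => Nat.fib t)

lemma vset_index_eq {N a b : ℕ} (ha : 1 ≤ a) (hb : 1 ≤ b) {x : Fin N → ℕ}
    (hxa : x ∈ Vset N a) (hxb : x ∈ Vset N b) : a = b := by
  have h1 : Nat.fib a = Nat.fib b := hxa.1 ▸ hxb.1
  have h2 : Nat.fib (a - 1) = Nat.fib (b - 1) := hxa.2 ▸ hxb.2
  have key : ∀ c d : ℕ, 1 ≤ c → c < d → Nat.fib c = Nat.fib d →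
      Nat.fib (c - 1) = Nat.fib (d - 1) → False := by
    intro c d hc hcd e1 e2
    rcases eq_or_lt_of_le hc with h | h
    · have : Nat.fib (d - 1) = 0 := by rw [← e2, ← h]; simp
      rw [Nat.fib_eq_zero] at this
      omega
    · have h2c : 2 ≤ c := h
      have : Nat.fib c < Nat.fib d :=
        lt_of_lt_of_le (Nat.fib_lt_fib_succ h2c) (Nat.fib_mono hcd)
      omega
  rcases lt_trichotomy a b with h | h | h
  · exact absurd (key a b ha h h1 h2) not_false
  · exact h
  · exact absurd (key b a hb h h1.symm h2.symm) not_false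

lemma vset_entry_bound {N n : ℕ} (hn : 1 ≤ n) {z : Fin N → ℕ} (hz : z ∈ Vset N n)
    {j : Fin N} (hj : z j ≠ 0) : (j : ℕ) + 1 ≤ n := by
  by_contra h
  push_neg at h
  have hterm : z j * Nat.fib ((j : ℕ) + 1) ≤ Nat.fib n := by
    rw [← hz.1]
    exact Finset.single_le_sum (f := fun i : Fin N => z i * Nat.fib ((i : ℕ) + 1))
      (fun i _ => Nat.zero_le _) (Finset.mem_univ j)
  rcases eq_or_lt_of_le hn with h1 | h1
  · have hj1 : 1 ≤ (j : ℕ) := by omega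
    have hterm2 : z j * Nat.fib (j : ℕ) ≤ Nat.fib (n - 1) := by
      rw [← hz.2]
      exact Finset.single_le_sum (f := fun i : Fin N => z i * Nat.fib (i : ℕ))
        (fun i _ => Nat.zero_le _) (Finset.mem_univ j)
    rw [← h1] at hterm2
    simp only [Nat.sub_self, Nat.fib_zero, Nat.le_zero, Nat.mul_eq_zero] at hterm2
    rcases hterm2 with h' | h'
    · exact hj h'
    · rw [Nat.fib_eq_zero] at h'; omega
  · have h2n : 2 ≤ n := h1
    have : Nat.fib n < Nat.fib ((j : ℕ) + 1) :=
      lt_of_lt_of_le (Nat.fib_lt_fib_succ h2n) (Nat.fib_mono (by omega))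
    have : Nat.fib ((j : ℕ) + 1) ≤ z j * Nat.fib ((j : ℕ) + 1) :=
      Nat.le_mul_of_pos_left _ (Nat.pos_of_ne_zero hj)
    omega

lemma vset_le_eq {N n : ℕ} {z w : Fin N → ℕ} (hz : z ∈ Vset N n) (hw : w ∈ Vset N n)
    (hle : ∀ j, w j ≤ z j) : w = z := by
  have hsum : ∑ j : Fin N, w j * Nat.fib ((j : ℕ) + 1)
      = ∑ j : Fin N, z j * Nat.fib ((j : ℕ) + 1) := hw.1.trans hz.1.symm
  have heach := (Finset.sum_eq_sum_iff_of_le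
    (fun i _ => Nat.mul_le_mul_right _ (hle i))).1 hsum
  funext j
  have := heach j (Finset.mem_univ j)
  have hfib : 0 < Nat.fib ((j : ℕ) + 1) := Nat.fib_pos.2 (Nat.succ_pos _)
  exact Nat.eq_of_mul_eq_mul_right hfib this

lemma acf_mono {N : ℕ} {z w : Fin N → ℕ} (hz : ACF N z) (h : ∀ j, w j ≤ z j) :
    ACF N w := by
  intro j hj hne i hi
  have h1 : w j ≠ 0 ∧ w ⟨(j : ℕ) + 1, hj⟩ ≠ 0 := Nat.mul_ne_zero_iff.1 hne
  have hz1 : z j * z ⟨(j : ℕ) + 1, hj⟩ ≠ 0 := by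
    have := h j; have := h ⟨(j : ℕ) + 1, hj⟩
    exact Nat.mul_ne_zero (by omega) (by omega)
  have := hz j hj hz1 i hi
  have := h i
  omega

lemma sset_sub_vset {N m : ℕ} (hm : 1 ≤ m) (hmN : m ≤ N) : Sset N m ⊆ Vset N m := by
  intro x hx
  unfold Sset at hx
  by_cases h1 : m = 1
  · subst h1
    simp only [if_pos rfl, Set.mem_singleton_iff] at hx
    subst hx
    have hN : 0 < N := by omega
    have hxe : xvec N 1 2 = (Pi.single (⟨0, hN⟩ : Fin N) 1 : Fin N → ℕ) := by
      funext j
      simp only [xvec, Pi.single_apply, Fin.ext_iff]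
      by_cases hj : (j : ℕ) = 0
      · simp [hj]
      · have h3 : ¬ ((j : ℕ) + 3 = 2) := by omega
        have h2 : ¬ ((j : ℕ) + 2 = 2) := by omega
        simp [h3, h2, hj]
    rw [hxe]
    exact single_mem_V _
  · rw [if_neg h1] at hx
    obtain ⟨i, hi3, him, hxe⟩ := hx
    subst hxe
    -- set p, s
    obtain ⟨p, hp⟩ : ∃ p, i = p + 3 := ⟨i - 3, by omega⟩
    obtain ⟨s, hs⟩ : ∃ s, m = p + s + 2 := ⟨m - (p + 2), by omega⟩
    have hpN : p < N := by omega
    have hp1N : p + 1 < N := by omega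
    have hxe : xvec N m i =
        (Pi.single (⟨p, hpN⟩ : Fin N) (Nat.fib s) : Fin N → ℕ) +
        (Pi.single (⟨p + 1, hp1N⟩ : Fin N) (Nat.fib (s + 1)) : Fin N → ℕ) := by
      funext j
      have e1 : m + 1 - i = s := by omega
      have e2 : m + 2 - i = s + 1 := by omega
      simp only [xvec, Pi.add_apply, Pi.single_apply, Fin.ext_iff, e1, e2]
      split_ifs <;> omega
    rw [hxe]
    constructor
    · simp only [Pi.add_apply, add_mul, Finset.sum_add_distrib]
      rw [sum_single_mul _ _ (fun t => Nat.fib (t + 1)),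
        sum_single_mul _ _ (fun t => Nat.fib (t + 1))]
      simp only
      have hm' : m = s + (p + 1) + 1 := by omega
      rw [hm']
      exact (Nat.fib_add s (p + 1)).symm
    · have hm1 : m - 1 = s + p + 1 := by omega
      simp only [Pi.add_apply, add_mul, Finset.sum_add_distrib]
      rw [sum_single_mul _ _ (fun t => Nat.fib t),
        sum_single_mul _ _ (fun t => Nat.fib t)]
      simp only
      rw [hm1]
      exact (Nat.fib_add s p).symm

lemma extract {N n : ℕ} {z : Fin N → ℕ} (hz : z ∈ Vset N n) (hns : ¬ SRestricted N n z) :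
    ∃ m w, 1 ≤ m ∧ m < n ∧ w ∈ Vset N m ∧ w ∉ Sset N m ∧ ∀ j, w j ≤ z j := by
  unfold SRestricted at hns
  push_neg at hns
  obtain ⟨K, idx, xs, hfac, hK, hnst⟩ := hns
  unfold STypeFac at hnst
  push_neg at hnst
  obtain ⟨k, hk⟩ := hnst
  obtain ⟨h1, h2, h3⟩ := hfac.1 k
  have hle : ∀ j, xs k j ≤ z j := by
    intro j
    have : z j = ∑ k', xs k' j := by rw [hfac.2]; simp
    rw [this]
    exact Finset.single_le_sum (f := fun k' => xs k' j)
      (fun _ _ => Nat.zero_le _) (Finset.mem_univ k)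
  refine ⟨idx k, xs k, h1, ?_, h3, ?_, hle⟩
  · rcases lt_or_eq_of_le h2 with h | h
    · exact h
    · exfalso
      rw [h] at h3
      have hEq : xs k = z := vset_le_eq hz h3 hle
      have hK2 : 1 < K := by have := k.pos; omega
      obtain ⟨k', hk'⟩ := Fintype.exists_ne_of_one_lt_card (by simpa using hK2) k
      have hzero : ∀ j, xs k' j = 0 := by
        intro j
        have hpair : xs k' j + xs k j ≤ ∑ t, xs t j := by
          have hsub := Finset.sum_le_sum_of_subset (f := fun t => xs t j)
            (Finset.subset_univ ({k', k} : Finset (Fin K)))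
          rwa [Finset.sum_pair hk'] at hsub
        have hzj : z j = ∑ t, xs t j := by rw [hfac.2]; simp
        have := congrFun hEq j
        omega
      have h1' := (hfac.1 k').1
      have h3' := (hfac.1 k').2.2
      have : Nat.fib (idx k') = 0 := by
        rw [← h3'.1]
        simp [hzero]
      rw [Nat.fib_eq_zero] at this
      omega
  · intro hS
    exact hk (idx k) h1 h2 hS

lemma descent {N : ℕ} {z : Fin N → ℕ} (hacf : ACF N z) :
    ∀ m, 1 ≤ m → ∀ w, w ∈ Vset N m → w ∉ Sset N m → (∀ j, w j ≤ z j) →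
      ∃ i, 1 ≤ i ∧ i ≤ m ∧ ∃ x, (x ∈ Rset N i ∧ x ∉ Sset N i) ∧ ∀ j, x j ≤ z j := by
  intro m
  induction m using Nat.strong_induction_on with
  | _ m ih =>
    intro hm w hwV hwS hwle
    by_cases hsr : SRestricted N m w
    · exact ⟨m, hm, le_refl m, w, ⟨⟨⟨hwV, acf_mono hacf hwle⟩, hsr⟩, hwS⟩, hwle⟩
    · obtain ⟨m', w', h1, h2, h3, h4, h5⟩ := extract hwV hsr
      obtain ⟨i, hi1, hi2, x, hx, hxle⟩ :=
        ih m' h2 h1 w' h3 h4 (fun j => le_trans (h5 j) (hwle j))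
      exact ⟨i, hi1, le_trans hi2 (le_of_lt h2), x, hx, hxle⟩

lemma aux_single_smul {N : ℕ} (a : Fin N) (c : ℕ) :
    c • (Pi.single a 1 : Fin N → ℕ) = (Pi.single a c : Fin N → ℕ) := by
  funext j
  simp only [Pi.smul_apply, Pi.single_apply, smul_eq_mul]
  split <;> simp

lemma aux_sum0 {N : ℕ} (y : Fin N → ℕ) (l : List (Fin N)) :
    ((l.flatMap fun j => List.replicate (y j) j).map
      fun j => (Pi.single j 1 : Fin N → ℕ)).sum
    = (l.map fun j => (Pi.single j (y j) : Fin N → ℕ)).sum := by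
  induction l with
  | nil => simp
  | cons a t iht =>
    simp only [List.flatMap_cons, List.map_append, List.sum_append, iht,
      List.map_replicate, List.sum_replicate, List.map_cons, List.sum_cons]
    rw [aux_single_smul]

lemma aux_sumy {N : ℕ} (y : Fin N → ℕ) :
    (((List.finRange N).flatMap fun j => List.replicate (y j) j).map
      fun j => (Pi.single j 1 : Fin N → ℕ)).sum = y := by
  rw [aux_sum0]
  rw [← Fin.sum_univ_def (fun j : Fin N => (Pi.single j (y j) : Fin N → ℕ))]
  exact Finset.univ_sum_single y

lemma fin_sum_get {N : ℕ} (L : List (ℕ × (Fin N → ℕ))) :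
    ∑ k : Fin L.length, (L.get k).2 = (L.map Prod.snd).sum := by
  rw [Fin.sum_univ_def]
  rw [show (fun k : Fin L.length => (L.get k).2) = Prod.snd ∘ L.get from rfl,
    ← List.map_map, List.map_get_finRange]

lemma list_fac {N n : ℕ} {z : Fin N → ℕ} (L : List (ℕ × (Fin N → ℕ)))
    (hmem : ∀ pr ∈ L, 1 ≤ pr.1 ∧ pr.1 ≤ n ∧ pr.2 ∈ Vset N pr.1)
    (hsum : (L.map Prod.snd).sum = z) :
    IsFactorization N n z (fun k => (L.get k).1) (fun k => (L.get k).2) := by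
  constructor
  · intro k
    exact hmem (L.get k) (List.get_mem L k)
  · rw [fin_sum_get, hsum]

lemma not_srestricted {N n i : ℕ} (hi1 : 1 ≤ i) (hin : i < n) (hnN : n ≤ N)
    {z x : Fin N → ℕ} (hz : z ∈ Vset N n) (hx : x ∈ Vset N i) (hxs : x ∉ Sset N i)
    (hle : ∀ j, x j ≤ z j) : ¬ SRestricted N n z := by
  intro hsr
  have hn1 : 1 ≤ n := by omega
  -- the complement vector
  have key : ∀ y : Fin N → ℕ, (∀ j, z j = x j + y j) →
      ∃ j, y j ≠ 0 := by
    intro y hyz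
    by_contra hy0
    push_neg at hy0
    have hzx : z = x := by
      funext j
      have := hyz j
      have := hy0 j
      omega
    have : n = i := vset_index_eq hn1 hi1 hz (hzx ▸ hx)
    omega
  -- define everything explicitly
  let y : Fin N → ℕ := fun j => z j - x j
  have hyz : ∀ j, z j = x j + y j := by
    intro j
    have := hle j
    simp only [y]
    omega
  obtain ⟨j0, hj0⟩ := key y hyz
  -- the list
  let L0 : List (Fin N) := (List.finRange N).flatMap (fun j => List.replicate (y j) j)
  let L : List (ℕ × (Fin N → ℕ)) :=
    (i, x) :: L0.map (fun j : Fin N => ((j : ℕ) + 1, (Pi.single j 1 : Fin N → ℕ)))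
  have hmem : ∀ pr ∈ L, 1 ≤ pr.1 ∧ pr.1 ≤ n ∧ pr.2 ∈ Vset N pr.1 := by
    intro pr hpr
    rcases List.mem_cons.1 hpr with hpr | hpr
    · rw [hpr]
      exact ⟨hi1, le_of_lt hin, hx⟩
    · rw [List.mem_map] at hpr
      obtain ⟨j, hjL0, hje⟩ := hpr
      have hyj : y j ≠ 0 := by
        have hjm : j ∈ L0 := hjL0
        rw [List.mem_flatMap] at hjm
        obtain ⟨a, _, hja⟩ := hjm
        rw [List.mem_replicate] at hja
        rw [hja.2]
        exact hja.1
      have hzj : z j ≠ 0 := by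
        have := hyz j
        omega
      have hbound : (j : ℕ) + 1 ≤ n := vset_entry_bound hn1 hz hzj
      rw [← hje]
      exact ⟨Nat.le_add_left _ _, hbound, single_mem_V j⟩
  have hmapsnd : L.map Prod.snd
      = x :: L0.map (fun j => (Pi.single j 1 : Fin N → ℕ)) := by
    simp only [L, List.map_cons, List.map_map]
    rfl
  have hsum : (L.map Prod.snd).sum = z := by
    rw [hmapsnd, List.sum_cons]
    have : (L0.map (fun j => (Pi.single j 1 : Fin N → ℕ))).sum = y := aux_sumy y
    rw [this]
    funext j
    have := hyz j
    simp only [Pi.add_apply]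
    omega
  have hfac := list_fac L hmem hsum
  have hKne : L.length ≠ 1 := by
    have hj0L0 : j0 ∈ L0 := by
      rw [List.mem_flatMap]
      exact ⟨j0, List.mem_finRange j0, List.mem_replicate.2 ⟨hj0, rfl⟩⟩
    have h1 : 0 < L0.length := List.length_pos_iff.2 (List.ne_nil_of_mem hj0L0)
    have h2 : L.length = L0.length + 1 := by
      simp [L, List.length_cons, List.length_map]
    omega
  have hstype := hsr L.length _ _ hfac hKne
  have h0 : (0 : ℕ) < L.length := by
    simp [L]
  obtain ⟨i', hi'1, hi'n, hxS⟩ := hstype ⟨0, h0⟩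
  have hget : (L.get ⟨0, h0⟩).2 = x := rfl
  have hxS' : x ∈ Sset N i' := by simpa only [hget] using hxS
  have hxV' : x ∈ Vset N i' := sset_sub_vset hi'1 (le_trans hi'n hnN) hxS'
  have : i' = i := vset_index_eq hi'1 hi1 hxV' hx
  rw [this] at hxS'
  exact hxs hxS' 

end Aux

/-- Lemma `RestrictedComputations`: for `N ≥ 3`, `1 ≤ n ≤ N` and
`z ∈ C_n \ S_n`, we have `z ∉ R_n` if and only if there are `1 ≤ i < n` and
`x ∈ R_i \ S_i` such that all entries of `z − x` are non-negative (i.e. `x_j ≤ z_j`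
componentwise). -/
theorem stmt15 (N n : ℕ) (hN : 3 ≤ N) (h1n : 1 ≤ n) (hnN : n ≤ N)
    (z : Fin N → ℕ) (hz : z ∈ Cset N n \ Sset N n) :
    z ∉ Rset N n ↔
      ∃ i : ℕ, 1 ≤ i ∧ i < n ∧ ∃ x ∈ Rset N i \ Sset N i, ∀ j : Fin N, x j ≤ z j := by
  obtain ⟨hzC, hzS⟩ := hz
  constructor
  · intro hzR
    have hns : ¬ SRestricted N n z := fun h => hzR ⟨hzC, h⟩
    obtain ⟨m, w, hm1, hmn, hwV, hwS, hwle⟩ := extract hzC.1 hns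
    obtain ⟨i, hi1, him, x, ⟨hxR, hxS⟩, hxle⟩ :=
      descent hzC.2 m hm1 w hwV hwS hwle
    exact ⟨i, hi1, lt_of_le_of_lt him hmn, x, ⟨hxR, hxS⟩, hxle⟩
  · rintro ⟨i, hi1, hin, x, hxmem, hxle⟩ hzR
    exact not_srestricted hi1 hin hnN hzC.1 hxmem.1.1.1 hxmem.2 hxle hzR.2
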